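/- Let X be a compact ultrametric space and let B be a ball of X containing at least two points. Then the collection of maximal proper subballs of B is finite, its members are pairwise disjoint, and their union is B; that is, B is partitioned by its maximal proper subballs, which are finite in number. -/

import Mathlib

/-- A ball in a metric space: an open metric ball of positive radius. -/
def IsBall {X : Type*} [MetricSpace X] (B : Set X) : Prop :=
  ∃ (c : X) (r : ℝ), 0 < r ∧ B = Metric.ball c r

/-- `B'` is a maximal proper subball of `B`: a ball properly contained in `B`
with no ball strictly between. -/
def IsMaxSubball {X : Type*} [MetricSpace X] (B' B : Set X) : Prop :=
  IsBall B' ∧ B' ⊂ B ∧ ∀ B'' : Set X, IsBall B'' → ¬(B' ⊂ B'' ∧ B'' ⊂ B)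

open Metric IsUltrametricDist

/-- In a compact ultrametric space, a ball with at least two points is
partitioned by its maximal proper subballs, which are finite in number. -/
theorem ball_partitioned_by_maximal_proper_subballs
    {X : Type*} [MetricSpace X] [CompactSpace X]
    (hX : ∀ x y z : X, dist x y ≤ max (dist x z) (dist z y))
    (B : Set X) (hB : IsBall B) (h2 : ∃ a ∈ B, ∃ b ∈ B, a ≠ b) :
    {B' : Set X | IsMaxSubball B' B}.Finite ∧
    {B' : Set X | IsMaxSubball B' B}.Pairwise (fun A A' => Disjoint A A') ∧
    ⋃₀ {B' : Set X | IsMaxSubball B' B} = B := by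
  haveI ult : IsUltrametricDist X := ⟨fun x y z => hX x z y⟩
  obtain ⟨c, r, hr, rfl⟩ := hB
  -- two maximal proper subballs that intersect are equal
  have key : ∀ A A' : Set X, IsMaxSubball A (Metric.ball c r) →
      IsMaxSubball A' (Metric.ball c r) → ¬ Disjoint A A' → A = A' := by
    intro A A' hA hA' hd
    obtain ⟨a, s, hs, rfl⟩ := hA.1
    obtain ⟨a', s', hs', rfl⟩ := hA'.1
    rcases ball_subset_trichotomy a a' s s' with h | h | h
    · by_contra hne
      exact hA.2.2 (Metric.ball a' s') hA'.1 ⟨h.ssubset_of_ne hne, hA'.2.1⟩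
    · by_contra hne
      exact hA'.2.2 (Metric.ball a s) hA.1 ⟨h.ssubset_of_ne (Ne.symm hne), hA.2.1⟩
    · exact absurd h hd
  -- for every point of B there is a maximal proper subball containing it
  have hcomp : IsCompact (Metric.ball c r) := (isClosed_ball c r).isCompact
  have hM : ∀ x : X, ∃ A : Set X,
      x ∈ Metric.ball c r → IsMaxSubball A (Metric.ball c r) ∧ x ∈ A := by
    intro x
    by_cases hx : x ∈ Metric.ball c r
    · have hBx : Metric.ball c r = Metric.ball x r := ball_eq_of_mem hx
      obtain ⟨y0, hy0, hy0max'⟩ := hcomp.exists_isMaxOn ⟨x, hx⟩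
        ((continuous_const.dist continuous_id).continuousOn :
          ContinuousOn (fun y => dist x y) _)
      have hy0max : ∀ y ∈ Metric.ball c r, dist x y ≤ dist x y0 :=
        fun y hy => hy0max' hy
      set t := dist x y0 with ht_def
      have ht : 0 < t := by
        obtain ⟨a, ha, b, hb, hab⟩ := h2
        rcases eq_or_ne x a with rfl | hxa
        · exact lt_of_lt_of_le (dist_pos.mpr hab) (hy0max b hb)
        · exact lt_of_lt_of_le (dist_pos.mpr hxa) (hy0max a ha)
      have htr : t < r := by
        have := hBx ▸ hy0
        rw [mem_ball] at this
        rw [ht_def, dist_comm]; exact this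
      refine ⟨Metric.ball x t, fun _ =>
        ⟨⟨⟨x, t, ht, rfl⟩, ⟨?_, fun hsup => ?_⟩, ?_⟩, Metric.mem_ball_self ht⟩⟩
      · rw [hBx]; exact Metric.ball_subset_ball htr.le
      · have := hsup hy0
        rw [mem_ball] at this
        rw [dist_comm] at this
        exact lt_irrefl _ this
      · rintro B'' ⟨z, ρ, hρ, rfl⟩ ⟨h1, h2'⟩
        have hxB'' : x ∈ Metric.ball z ρ := h1.1 (Metric.mem_ball_self ht)
        have hB''x : Metric.ball z ρ = Metric.ball x ρ := ball_eq_of_mem hxB''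
        obtain ⟨w, hwB'', hwt⟩ := Set.exists_of_ssubset h1
        have hwr : w ∈ Metric.ball c r := h2'.1 hwB''
        have hle : t ≤ dist x w := by
          by_contra hlt
          push_neg at hlt
          exact hwt (by rw [mem_ball, dist_comm]; exact hlt)
        have hweq : dist x w = t := le_antisymm (hy0max w hwr) hle
        have htρ : t < ρ := by
          have hw' := hB''x ▸ hwB''
          rw [mem_ball] at hw'
          rw [← hweq, dist_comm]; exact hw'
        refine absurd (fun y hy => ?_) h2'.2
        rw [hB''x, mem_ball, dist_comm]
        exact lt_of_le_of_lt (hy0max y hy) htρ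
    · exact ⟨∅, fun hx' => absurd hx' hx⟩
  choose M hMspec using hM
  -- finite subcover
  obtain ⟨s, hs⟩ := hcomp.elim_finite_subcover
    (fun i : Metric.ball c r => M i)
    (fun i => by
      obtain ⟨⟨⟨a, ρ, hρ, hEq⟩, -, -⟩, -⟩ := hMspec i i.2
      rw [hEq]; exact Metric.isOpen_ball)
    (fun y hy => Set.mem_iUnion.mpr ⟨⟨y, hy⟩, (hMspec y hy).2⟩)
  have hsub : {B' : Set X | IsMaxSubball B' (Metric.ball c r)} ⊆
      (fun i : Metric.ball c r => M i) '' ↑s := by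
    intro A hA
    obtain ⟨a, ρ, hρ, hEq⟩ := hA.1
    have hzA : a ∈ A := hEq ▸ Metric.mem_ball_self hρ
    have hzB : a ∈ Metric.ball c r := hA.2.1.1 hzA
    have := hs hzB
    rw [Set.mem_iUnion₂] at this
    obtain ⟨i, hi, hzi⟩ := this
    have : A = M i := key A (M i) hA (hMspec i i.2).1
      (Set.not_disjoint_iff.mpr ⟨a, hzA, hzi⟩)
    exact ⟨i, hi, this.symm⟩
  refine ⟨((s.finite_toSet).image _).subset hsub, ?_, ?_⟩
  · intro A hA A' hA' hne
    by_contra hd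
    exact hne (key A A' hA hA' hd)
  · apply Set.Subset.antisymm
    · exact Set.sUnion_subset fun A hA => hA.2.1.1
    · intro x hx
      exact Set.mem_sUnion.mpr ⟨M x, (hMspec x hx).1, (hMspec x hx).2⟩
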